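/- Let B be a commutative ring, x ∈ B a nilpotent element, A a commutative B-algebra, and M a finitely generated A-module that is flat as a B-module. If M/xM is a free module over A/xA, then M is a free A-module. -/

import Mathlib

universe u v w

/-- Let `B` be a commutative ring, `x ∈ B` nilpotent, `A` a commutative
`B`-algebra, and `M` a finitely generated `A`-module that is flat as a `B`-module.
If `M/xM` is free over `A/xA`, then `M` is a free `A`-module. -/
theorem free_of_quotient_nilpotent_free
    (B : Type u) [CommRing B] (A : Type v) [CommRing A] [Algebra B A]
    (x : B) (hx : IsNilpotent x)
    (M : Type w) [AddCommGroup M] [Module A M] [Module B M] [IsScalarTower B A M]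
    [Module.Finite A M] [Module.Flat B M]
    (hfree : Module.Free (A ⧸ Ideal.span {algebraMap B A x})
      (M ⧸ (Ideal.span {algebraMap B A x} • ⊤ : Submodule A M))) :
    Module.Free A M := by
  classical
  obtain ⟨e, he⟩ := hx
  set a : A := algebraMap B A x with ha
  set I : Ideal A := Ideal.span {a} with hI
  set N : Submodule A M := I • ⊤ with hN
  have hae : a ^ e = (0 : A) := by rw [ha, ← map_pow, he, map_zero]
  haveI : Module.Finite A (M ⧸ N) := Module.Finite.of_surjective N.mkQ N.mkQ_surjective
  haveI : IsScalarTower A (A ⧸ I) (M ⧸ N) :=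
    Module.IsTorsionBySet.isScalarTower (Module.isTorsionBySet_quotient_ideal_smul M I)
  haveI : Module.Finite (A ⧸ I) (M ⧸ N) := Module.Finite.of_restrictScalars_finite A _ _
  set ι := Module.Free.ChooseBasisIndex (A ⧸ I) (M ⧸ N) with hι
  set b : Module.Basis ι (A ⧸ I) (M ⧸ N) := Module.Free.chooseBasis _ _ with hb
  choose m hm using fun i : ι => N.mkQ_surjective (b i)
  set f : (ι → A) →ₗ[A] M := Fintype.linearCombination A m with hf
  have hfapp : ∀ c : ι → A, f c = ∑ i, c i • m i := fun c =>
    Fintype.linearCombination_apply A m c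
  -- mkQ of a smul
  have hmk : ∀ (r : A) (z : M), N.mkQ (r • z) = Ideal.Quotient.mk I r • N.mkQ z := by
    intro r z
    exact (Module.Quotient.mk_smul_mk M I r z).symm
  -- Surjectivity of f
  have h1 : LinearMap.range f ⊔ N = ⊤ := by
    rw [eq_top_iff]
    intro z _
    choose c hc using fun i => Ideal.Quotient.mk_surjective (I := I) (b.repr (N.mkQ z) i)
    set s : M := ∑ i, c i • m i with hs
    have hz2 : N.mkQ s = N.mkQ z := by
      rw [hs, map_sum]
      have : ∀ i, N.mkQ (c i • m i) = b.repr (N.mkQ z) i • b i := by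
        intro i; rw [hmk, hc, hm]
      rw [Finset.sum_congr rfl fun i _ => this i]
      exact b.sum_repr _
    have hzs : z - s ∈ N := by
      have := (Submodule.Quotient.eq N).mp hz2
      simpa using N.neg_mem this
    have hsr : s ∈ LinearMap.range f := ⟨fun i => c i, (hfapp _).symm⟩
    have : z = s + (z - s) := by abel
    rw [this]
    exact Submodule.add_mem_sup hsr hzs
  have h2 : ∀ k : ℕ, (⊤ : Submodule A M) ≤ LinearMap.range f ⊔ (I ^ k • ⊤) := by
    intro k
    induction k with
    | zero => rw [pow_zero, Ideal.one_eq_top, Submodule.top_smul]; exact le_sup_right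
    | succ n ih =>
      have step : N ≤ LinearMap.range f ⊔ I ^ (n + 1) • ⊤ := by
        rw [hN]
        calc I • (⊤ : Submodule A M) ≤ I • (LinearMap.range f ⊔ I ^ n • ⊤) :=
              Submodule.smul_mono le_rfl ih
          _ = I • LinearMap.range f ⊔ I • I ^ n • ⊤ := Submodule.smul_sup _ _ _
          _ ≤ LinearMap.range f ⊔ I ^ (n + 1) • ⊤ := by
              apply sup_le_sup Submodule.smul_le_right
              rw [pow_succ', ← Ideal.smul_eq_mul, Submodule.smul_assoc]
      calc (⊤ : Submodule A M) = LinearMap.range f ⊔ N := h1.symm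
        _ ≤ LinearMap.range f ⊔ (LinearMap.range f ⊔ I ^ (n + 1) • ⊤) := sup_le_sup le_rfl step
        _ = LinearMap.range f ⊔ I ^ (n + 1) • ⊤ := by rw [← sup_assoc, sup_idem]
  have hsur : Function.Surjective f := by
    rw [← LinearMap.range_eq_top, eq_top_iff]
    have := h2 e
    rwa [hI, Ideal.span_singleton_pow, hae, Ideal.span_singleton_eq_bot.mpr rfl,
      Submodule.bot_smul, sup_bot_eq] at this
  -- Flatness consequence: if x • m = 0 then m ∈ (Ann x) • M
  set J : Ideal B := LinearMap.ker (LinearMap.lsmul B B x) with hJ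
  have flat_lemma : ∀ m0 : M, x • m0 = 0 → m0 ∈ J • (⊤ : Submodule B M) := by
    intro m0 hm0
    have hexact : Function.Exact J.subtype (LinearMap.lsmul B B x) := by
      rw [LinearMap.exact_iff, Submodule.range_subtype, hJ]
    have hT := Module.Flat.lTensor_exact M hexact
    have h1 : (LinearMap.lTensor M (LinearMap.lsmul B B x)) (m0 ⊗ₜ[B] (1 : B)) = 0 := by
      rw [LinearMap.lTensor_tmul, LinearMap.lsmul_apply, TensorProduct.tmul_smul,
        TensorProduct.smul_tmul', hm0, TensorProduct.zero_tmul]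
    obtain ⟨z, hz⟩ := (hT (m0 ⊗ₜ[B] (1 : B))).mp h1
    have hmem : ∀ z0 : TensorProduct B M J,
        (TensorProduct.rid B M) ((LinearMap.lTensor M J.subtype) z0) ∈
          J • (⊤ : Submodule B M) := by
      intro z0
      induction z0 using TensorProduct.induction_on with
      | zero => simp
      | tmul w j =>
        rw [LinearMap.lTensor_tmul, TensorProduct.rid_tmul]
        exact Submodule.smul_mem_smul j.2 Submodule.mem_top
      | add z₁ z₂ h₁ h₂ =>
        rw [map_add, map_add]
        exact Submodule.add_mem _ h₁ h₂
    have := hmem z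
    rw [hz] at this
    simpa using this
  -- Key step: every element of the kernel is `a` times an element of the kernel
  have key : ∀ k ∈ LinearMap.ker f, ∃ k' ∈ LinearMap.ker f, k = a • k' := by
    intro k hk
    have hfk : f k = 0 := hk
    -- components of k lie in I
    have hcomp : ∀ i, k i ∈ I := by
      have h0 : ∑ i, (Ideal.Quotient.mk I (k i)) • b i = 0 := by
        have : N.mkQ (f k) = 0 := by rw [hfk, map_zero]
        calc ∑ i, Ideal.Quotient.mk I (k i) • b i
            = ∑ i, N.mkQ (k i • m i) := by
              refine Finset.sum_congr rfl fun i _ => ?_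
              rw [hmk, hm]
          _ = N.mkQ (f k) := by rw [hfapp, map_sum]
          _ = 0 := this
      intro i
      have h1 := Fintype.linearIndependent_iff.mp b.linearIndependent _ h0 i
      rwa [Ideal.Quotient.eq_zero_iff_mem] at h1
    choose c hc using fun i => Ideal.mem_span_singleton'.mp (hcomp i)
    have hkc : k = a • c := by
      funext i
      rw [Pi.smul_apply, smul_eq_mul, mul_comm]
      exact (hc i).symm
    -- x • (f c) = 0 in M
    have hxfc : x • f c = 0 := by
      have : a • f c = 0 := by
        rw [← map_smul, ← hkc, hfk]
      rwa [ha, algebraMap_smul] at this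
    -- flatness: f c lies in (Ann x) • M
    have hmem : f c ∈ J • (⊤ : Submodule B M) := flat_lemma _ hxfc
    -- the set of elements of M of the form f v with a • v = 0 is a B-submodule
    let S : Submodule B M :=
      { carrier := {z | ∃ v : ι → A, f v = z ∧ a • v = 0}
        zero_mem' := ⟨0, by simp, by simp⟩
        add_mem' := by
          rintro z₁ z₂ ⟨v₁, h₁, h₁'⟩ ⟨v₂, h₂, h₂'⟩
          exact ⟨v₁ + v₂, by rw [map_add, h₁, h₂], by rw [smul_add, h₁', h₂', add_zero]⟩
        smul_mem' := by
          rintro t z ⟨v, hv, hv'⟩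
          refine ⟨t • v, ?_, ?_⟩
          · rw [← algebraMap_smul A t v, map_smul, algebraMap_smul, hv]
          · rw [smul_comm, hv', smul_zero] }
    have hJS : J • (⊤ : Submodule B M) ≤ S := by
      refine Submodule.smul_le.mpr ?_
      intro t ht w _
      obtain ⟨u, hu⟩ := hsur w
      refine ⟨t • u, ?_, ?_⟩
      · rw [← algebraMap_smul A t u, map_smul, algebraMap_smul, hu]
      · have hxt : x * t = 0 := by simpa [J] using ht
        rw [← algebraMap_smul A t u, smul_smul, ha, ← map_mul, hxt, map_zero, zero_smul]
    obtain ⟨v, hfv, hav⟩ := hJS hmem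
    refine ⟨c - v, ?_, ?_⟩
    · have : f (c - v) = 0 := by rw [map_sub, hfv, sub_self]
      exact this
    · rw [smul_sub, hav, sub_zero, ← hkc]
  -- iterate the key step
  have iter : ∀ j : ℕ, ∀ k ∈ LinearMap.ker f, ∃ k' ∈ LinearMap.ker f, k = a ^ j • k' := by
    intro j
    induction j with
    | zero => intro k hk; exact ⟨k, hk, by simp⟩
    | succ n ih =>
      intro k hk
      obtain ⟨k', hk', hkk'⟩ := key k hk
      obtain ⟨k'', hk'', hk2⟩ := ih k' hk'
      exact ⟨k'', hk'', by rw [hkk', hk2, smul_smul, ← pow_succ']⟩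
  have hinj : Function.Injective f := by
    rw [← LinearMap.ker_eq_bot, eq_bot_iff]
    intro k hk
    obtain ⟨k', _, hkk'⟩ := iter e k hk
    rw [hkk', hae, zero_smul]
    exact Submodule.zero_mem ⊥
  exact Module.Free.of_equiv (LinearEquiv.ofBijective f ⟨hinj, hsur⟩)
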